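/- With notation as in the definition of the array-type polynomials and the 3-variable truncated exponential-Gould-Hopper polynomials, the following explicit formula holds: _{eH}P_{n-kα,β}^{(-α,m,r)}(x,y,z;k,a,b) = (α! a^{bα}/2^{(1-k)α}) · ((n-kα)!/n!) · Σ_{p=0}^{n} binom(n,p) S(p, α; (β/a)^b) · _eH_{n-p}^{(m,r)}(x,y,z), where S(p,α;λ) := S(0;p,α;λ) are the λ-Stirling numbers of the second kind. -/

import Mathlib

open scoped BigOperators

/-- The exponential series `e^{ct}` in `ℂ[[t]]`. -/
noncomputable def expC (c : ℂ) : PowerSeries ℂ :=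
  PowerSeries.mk fun n => c ^ n / n.factorial

/-- The series `e^{y t^m} = ∑_k y^k t^{mk}/k!` in `ℂ[[t]]`. -/
noncomputable def expMonC (y : ℂ) (m : ℕ) : PowerSeries ℂ :=
  PowerSeries.mk fun n => if m ∣ n then y ^ (n / m) / (n / m).factorial else 0


lemma ofReal_mul_cpow_aux (ρ : ℝ) (hρ : 0 < ρ) (w : ℂ) (hw : w ≠ 0) (c : ℂ) :
    ((ρ : ℂ) * w) ^ c = (ρ : ℂ) ^ c * w ^ c := by
  have hρ0 : (ρ : ℂ) ≠ 0 := Complex.ofReal_ne_zero.mpr hρ.ne'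
  rw [Complex.cpow_def_of_ne_zero (mul_ne_zero hρ0 hw),
    Complex.cpow_def_of_ne_zero hρ0, Complex.cpow_def_of_ne_zero hw,
    mul_comm (ρ:ℂ) w, Complex.log_mul_ofReal ρ hρ w hw, add_mul, Complex.exp_add,
    Complex.ofReal_log hρ.le]

lemma cpow_split_aux (a : ℝ) (ha : 0 < a) (β : ℂ) (c : ℂ) (hc : c ≠ 0) :
    ((a : ℂ)) ^ c * (β / (a : ℂ)) ^ c = β ^ c := by
  by_cases hβ : β = 0
  · simp [hβ, Complex.zero_cpow hc]
  · have ha0 : (a : ℂ) ≠ 0 := Complex.ofReal_ne_zero.mpr ha.ne'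
    have hw : β / (a : ℂ) ≠ 0 := div_ne_zero hβ ha0
    have : β = (a : ℂ) * (β / (a : ℂ)) := by field_simp
    conv_rhs => rw [this]
    rw [ofReal_mul_cpow_aux a ha _ hw]

/-- Explicit formula for the negative-order unified Apostol type-truncated
exponential-Gould-Hopper polynomials in terms of the λ-Stirling numbers of the
second kind `St p = S(p,α;(β/a)^b)` and the 3-variable truncated
exponential-Gould-Hopper polynomials `EH`.  All generating functions are stated
with denominators cleared. -/
theorem negative_order_apostol_tegh_stirling
    (a b : ℝ) (ha : 0 < a) (hb : 0 < b) (β : ℂ) (x y z : ℝ)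
    (k α m r : ℕ) (hk : 1 ≤ k) (hα : 1 ≤ α) (hm : 1 ≤ m) (hr : 1 ≤ r)
    (St Q EH : ℕ → ℂ)
    (hSt : (PowerSeries.C ((β / (a : ℂ)) ^ (b : ℂ)) * expC 1 - 1) ^ α =
        PowerSeries.C (α.factorial : ℂ) * PowerSeries.mk (fun n => St n / n.factorial))
    (hEH : PowerSeries.mk (fun n => EH n / n.factorial) *
        (1 - PowerSeries.C (z : ℂ) * PowerSeries.X ^ r) =
        expC (x : ℂ) * expMonC (y : ℂ) m)
    (hQ : (PowerSeries.C (β ^ (b : ℂ)) * expC 1 -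
          PowerSeries.C ((a ^ b : ℝ) : ℂ)) ^ α * (expC (x : ℂ) * expMonC (y : ℂ) m) =
        PowerSeries.C ((((2 : ℝ) ^ ((1 : ℝ) - (k : ℝ)) : ℝ) : ℂ)) ^ α *
          PowerSeries.X ^ (k * α) *
          ((1 - PowerSeries.C (z : ℂ) * PowerSeries.X ^ r) *
            PowerSeries.mk (fun n => Q n / n.factorial)))
    (n : ℕ) (hn : k * α ≤ n) :
    Q (n - k * α) =
      (α.factorial : ℂ) * (((a ^ b : ℝ) : ℂ)) ^ α /
          ((((2 : ℝ) ^ ((1 : ℝ) - (k : ℝ)) : ℝ) : ℂ)) ^ α *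
        (((n - k * α).factorial : ℂ) / (n.factorial : ℂ)) *
        ∑ p ∈ Finset.range (n + 1), (n.choose p : ℂ) * St p * EH (n - p) := by

  classical
  set A : ℂ := (((a ^ b : ℝ)) : ℂ) with hA
  set c : ℂ := ((((2 : ℝ) ^ ((1 : ℝ) - (k : ℝ)) : ℝ)) : ℂ) with hcdef
  set lam : ℂ := (β / (a : ℂ)) ^ (b : ℂ) with hlam
  have hbne : ((b : ℂ)) ≠ 0 := by
    exact_mod_cast Complex.ofReal_ne_zero.mpr hb.ne'
  have hAcpow : A = ((a : ℂ)) ^ ((b : ℂ)) := Complex.ofReal_cpow ha.le b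
  have hAlam : A * lam = β ^ (b : ℂ) := by
    rw [hAcpow, hlam]; exact cpow_split_aux a ha β _ hbne
  -- the factorization of the Apostol factor
  have hfact : PowerSeries.C (β ^ (b : ℂ)) * expC 1 - PowerSeries.C A =
      PowerSeries.C A * (PowerSeries.C lam * expC 1 - 1) := by
    rw [← hAlam, map_mul]; ring
  -- rewrite hQ
  have hQ' : PowerSeries.C A ^ α * (PowerSeries.C (α.factorial : ℂ) *
        PowerSeries.mk (fun n => St n / n.factorial)) *
        ((1 - PowerSeries.C (z : ℂ) * PowerSeries.X ^ r) *
          PowerSeries.mk (fun n => EH n / n.factorial)) =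
      PowerSeries.C c ^ α * PowerSeries.X ^ (k * α) *
        ((1 - PowerSeries.C (z : ℂ) * PowerSeries.X ^ r) *
          PowerSeries.mk (fun n => Q n / n.factorial)) := by
    rw [← hSt, mul_comm (1 - PowerSeries.C (z : ℂ) * PowerSeries.X ^ r)
        (PowerSeries.mk fun n => EH n / (n.factorial : ℂ)), hEH, ← mul_pow, ← hfact]
    exact hQ
  -- cancel the common unit factor
  have hGne : (1 - PowerSeries.C (z : ℂ) * PowerSeries.X ^ r) ≠ 0 := by
    intro h
    have := congrArg (PowerSeries.constantCoeff) h
    simp [PowerSeries.constantCoeff_X, zero_pow (Nat.one_le_iff_ne_zero.mp hr)] at this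
  have hcancel : PowerSeries.C A ^ α * (PowerSeries.C (α.factorial : ℂ) *
        PowerSeries.mk (fun n => St n / n.factorial)) *
        PowerSeries.mk (fun n => EH n / n.factorial) =
      PowerSeries.C c ^ α * PowerSeries.X ^ (k * α) *
        PowerSeries.mk (fun n => Q n / n.factorial) := by
    apply mul_left_cancel₀ hGne
    calc (1 - PowerSeries.C (z : ℂ) * PowerSeries.X ^ r) *
          (PowerSeries.C A ^ α * (PowerSeries.C (α.factorial : ℂ) *
            PowerSeries.mk (fun n => St n / n.factorial)) *
            PowerSeries.mk (fun n => EH n / n.factorial))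
        = PowerSeries.C A ^ α * (PowerSeries.C (α.factorial : ℂ) *
            PowerSeries.mk (fun n => St n / n.factorial)) *
            ((1 - PowerSeries.C (z : ℂ) * PowerSeries.X ^ r) *
              PowerSeries.mk (fun n => EH n / n.factorial)) := by ring
      _ = PowerSeries.C c ^ α * PowerSeries.X ^ (k * α) *
            ((1 - PowerSeries.C (z : ℂ) * PowerSeries.X ^ r) *
              PowerSeries.mk (fun n => Q n / n.factorial)) := hQ'
      _ = _ := by ring
  -- compare coefficients at degree n
  have hcancel2 : PowerSeries.C (A ^ α * (α.factorial : ℂ)) *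
        (PowerSeries.mk (fun n => St n / n.factorial) *
          PowerSeries.mk (fun n => EH n / n.factorial)) =
      PowerSeries.C (c ^ α) *
        (PowerSeries.X ^ (k * α) * PowerSeries.mk (fun n => Q n / n.factorial)) := by
    rw [map_mul, map_pow, map_pow]
    linear_combination hcancel
  have hcoeff := congrArg (PowerSeries.coeff n) hcancel2
  rw [PowerSeries.coeff_C_mul, PowerSeries.coeff_C_mul,
    PowerSeries.coeff_X_pow_mul' _ (k * α) n, if_pos hn, PowerSeries.coeff_mk,
    PowerSeries.coeff_mul, Finset.Nat.sum_antidiagonal_eq_sum_range_succ_mk] at hcoeff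
  simp only [PowerSeries.coeff_mk] at hcoeff
  simp only [Nat.succ_eq_add_one] at hcoeff
  -- now pure algebra
  set S : ℂ := ∑ p ∈ Finset.range (n + 1),
      St p / (p.factorial : ℂ) * (EH (n - p) / ((n - p).factorial : ℂ)) with hSdef
  have hcne : c ≠ 0 := by
    rw [hcdef]
    exact Complex.ofReal_ne_zero.mpr (Real.rpow_pos_of_pos (by norm_num) _).ne'
  have hcane : c ^ α ≠ 0 := pow_ne_zero _ hcne
  have hnfac : ((n.factorial : ℂ)) ≠ 0 := by exact_mod_cast n.factorial_ne_zero
  have hnkfac : (((n - k * α).factorial : ℂ)) ≠ 0 := by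
    exact_mod_cast (n - k * α).factorial_ne_zero
  have hsum : ∑ p ∈ Finset.range (n + 1), (n.choose p : ℂ) * St p * EH (n - p) =
      (n.factorial : ℂ) * S := by
    rw [hSdef, Finset.mul_sum]
    refine Finset.sum_congr rfl fun p hp => ?_
    have hpn : p ≤ n := Nat.lt_succ_iff.mp (Finset.mem_range.mp hp)
    have hch := Nat.choose_mul_factorial_mul_factorial hpn
    have hch' : (n.choose p : ℂ) * (p.factorial : ℂ) * ((n - p).factorial : ℂ) =
        (n.factorial : ℂ) := by exact_mod_cast congrArg (Nat.cast (R := ℂ)) hch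
    have hpfac : ((p.factorial : ℂ)) ≠ 0 := by exact_mod_cast p.factorial_ne_zero
    have hnpfac : (((n - p).factorial : ℂ)) ≠ 0 := by
      exact_mod_cast (n - p).factorial_ne_zero
    field_simp
    linear_combination St p * EH (n - p) * hch'
  have hcoeff' : A ^ α * (α.factorial : ℂ) * S * (((n - k * α).factorial : ℂ)) =
      c ^ α * Q (n - k * α) := by
    calc A ^ α * (α.factorial : ℂ) * S * (((n - k * α).factorial : ℂ))
        = c ^ α * (Q (n - k * α) / ((n - k * α).factorial : ℂ)) *
            (((n - k * α).factorial : ℂ)) := by rw [hcoeff]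
      _ = c ^ α * Q (n - k * α) := by rw [mul_assoc, div_mul_cancel₀ _ hnkfac]
  rw [hsum]
  have h2 : (α.factorial : ℂ) * A ^ α / c ^ α *
        (((n - k * α).factorial : ℂ) / (n.factorial : ℂ)) * ((n.factorial : ℂ) * S) =
      A ^ α * (α.factorial : ℂ) * S * (((n - k * α).factorial : ℂ)) / c ^ α := by
    field_simp
  rw [h2, eq_div_iff hcane, hcoeff']
  ring
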